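/- Let 𝒜 be an algebra of subsets of 𝔾 and let μ : 𝒜 → [0,∞) be a content (μ(∅) = 0, μ finitely additive on disjoint sets) with μ(𝔾) = 1 such that: (i) for every prime p and every M ⊆ 𝒫 one has π_p⁻¹(M) ∈ 𝒜, and (ii) for any finitely many distinct primes p₁,…,p_k and sets M₁,…,M_k ⊆ 𝒫, μ(⋂_{i=1}^k π_{p_i}⁻¹(M_i)) = ∏_{i=1}^k P_{p_i}(M_i). For G ∈ 𝔾 define ord(G) := ∏_p p^{|G_p|}, where |λ| is the integer that the partition λ partitions. Then for every n ≥ 1, if S_n := {G ∈ 𝔾 : ord(G) = n} belongs to 𝒜, then μ(S_n) = 0. Consequently, if all S_n belong to 𝒜, then 𝔾 is a countable disjoint union of μ-null sets of 𝒜, so μ is not countably additive. -/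

import Mathlib

open Filter Topology

/-- The type of all integer partitions (of all natural numbers `n`). -/
def PartitionsAll : Type := Σ n : ℕ, Nat.Partition n

/-- The empty partition of `0`. -/
def partZero : PartitionsAll := ⟨0, ⟨0, by simp, rfl⟩⟩

/-- The unique partition of `1`. -/
def partOne : PartitionsAll :=
  ⟨1, ⟨{1}, by intro i hi; rw [Multiset.mem_singleton] at hi; omega, rfl⟩⟩

instance : Zero PartitionsAll := ⟨partZero⟩

/-- The set of isomorphism classes of finite abelian groups, identified with the
finitely supported families of partitions indexed by the primes. -/
abbrev GG : Type := Nat.Primes →₀ PartitionsAll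

/-- The finite abelian `p`-group `⊕ⱼ ℤ/p^{λ_j}ℤ` corresponding to a partition `λ`. -/
abbrev pGroup (p : ℕ) (lam : PartitionsAll) : Type :=
  ∀ i : Fin lam.2.parts.toList.length, ZMod (p ^ lam.2.parts.toList.get i)

/-- The Cohen–Lenstra weight `w_p(λ) = 1/#Aut(G_{p,λ})`. -/
noncomputable def wCL (p : ℕ) (lam : PartitionsAll) : ℝ :=
  ((Nat.card (AddAut (pGroup p lam)) : ℝ))⁻¹

/-- `∏_{i=1}^∞ (1 - p^{-i})`. -/
noncomputable def clC (p : ℕ) : ℝ := ∏' i : ℕ, (1 - ((p : ℝ))⁻¹ ^ (i + 1))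

/-- The local Cohen–Lenstra probability `P_p(S) = (∑_{λ∈S} w_p(λ)) ∏_{i≥1}(1-p^{-i})`. -/
noncomputable def Pp (p : ℕ) (S : Set PartitionsAll) : ℝ :=
  (∑' lam : S, wCL p lam) * clC p

/-- The primes `≤ x`. -/
def primesUpTo (x : ℕ) : Finset ℕ := Nat.primesBelow (x + 1)

/-- The partial products `∏_{p ≤ x} P_p(S)`. -/
noncomputable def globPartial (S : Set PartitionsAll) (x : ℕ) : ℝ :=
  ∏ p ∈ primesUpTo x, Pp p S

/-- The global value `lim_{x→∞} ∏_{p ≤ x} P_p(S)` (the limit exists since all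
factors lie in `[0,1]`). -/
noncomputable def glob (S : Set PartitionsAll) : ℝ :=
  limUnder atTop (globPartial S)

/-- `O(S) = {G : G_p ∈ S for all primes p}`. -/
def Oset (S : Set PartitionsAll) : Set GG := {G : GG | ∀ p : Nat.Primes, G p ∈ S}

/-- `O(E₁, …, E_r) = O(E₁) ∪ … ∪ O(E_r)`. -/
def OOset {r : ℕ} (E : Fin r → Set PartitionsAll) : Set GG := ⋃ i, Oset (E i)

/-- Inclusion–exclusion value of `O(E₁, …, E_r)`. -/
noncomputable def PO {r : ℕ} (E : Fin r → Set PartitionsAll) : ℝ :=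
  ∑ T ∈ Finset.univ.filter (fun T : Finset (Fin r) => T.Nonempty),
    (-1 : ℝ) ^ (T.card + 1) * glob (⋂ i ∈ T, E i)

/-- The collection `𝔇` of sets `D(E₁,…,E_r;F₁,…,F_s)`. -/
def DD : Set (Set GG) :=
  {A | ∃ (r s : ℕ) (E : Fin r → Set PartitionsAll) (F : Fin s → Set PartitionsAll),
      OOset F ⊆ OOset E ∧ A = OOset E \ OOset F}

/-- The value `P(D)` of a set `D ∈ 𝔇` (well-defined: it depends only on the set `D`). -/
noncomputable def PDval (A : Set GG) : ℝ :=
  sSup {x : ℝ | ∃ (r s : ℕ) (E : Fin r → Set PartitionsAll) (F : Fin s → Set PartitionsAll),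
      OOset F ⊆ OOset E ∧ A = OOset E \ OOset F ∧ x = PO E - PO F}

/-- The outer measure `ν`. -/
noncomputable def nuCL (A : Set GG) : ℝ :=
  sInf {x : ℝ | ∃ C : ℕ → Set GG, (∀ i, C i ∈ DD) ∧ A ⊆ ⋃ i, C i ∧ x = ∑' i, PDval (C i)}

/-- The order of a finite abelian group. -/
def ordG (G : GG) : ℕ := G.prod fun p lam => (p : ℕ) ^ lam.1

/-- The exponent of a finite abelian group. -/
def expG (G : GG) : ℕ := G.prod fun p lam => (p : ℕ) ^ lam.2.parts.sup


section AuxLemmas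

lemma lam_eq_zero {lam : PartitionsAll} (h : lam.1 = 0) : lam = partZero := by
  obtain ⟨m, P⟩ := lam
  simp only at h
  subst h
  unfold partZero
  exact congrArg _ (Subsingleton.elim _ _)

lemma clC_aux {p : ℕ} (hp : 2 ≤ p) : 0 ≤ clC p ∧ clC p ≤ 1 - ((p:ℝ))⁻¹ := by
  have hp2 : (2:ℝ) ≤ (p:ℝ) := by exact_mod_cast hp
  set x : ℝ := (p:ℝ)⁻¹ with hxdef
  have hx0 : 0 < x := inv_pos.2 (by linarith)
  have hxh : x ≤ 2⁻¹ := by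
    rw [hxdef]
    exact inv_anti₀ (by norm_num) hp2
  set f : ℕ → ℝ := fun i => 1 - x ^ (i + 1) with hfdef
  have hpow_pos : ∀ i : ℕ, 0 < x ^ (i + 1) := fun i => pow_pos hx0 _
  have hpow_le : ∀ i : ℕ, x ^ (i + 1) ≤ x := by
    intro i
    calc x ^ (i+1) ≤ x ^ 1 := pow_le_pow_of_le_one hx0.le (by norm_num; linarith) (by omega)
      _ = x := pow_one x
  have hf_pos : ∀ i, 0 < f i := by
    intro i; have := hpow_le i; simp only [hfdef]; nlinarith
  have hf_half : ∀ i, 2⁻¹ ≤ f i := by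
    intro i; have := hpow_le i; simp only [hfdef]; nlinarith
  have hf_le1 : ∀ i, f i ≤ 1 := by
    intro i; have := hpow_pos i; simp only [hfdef]; nlinarith
  have hlog : Summable fun i => Real.log (f i) := by
    have key : ∀ i, -Real.log (f i) ≤ 2 * x ^ (i + 1) := by
      intro i
      have h1 : Real.log (f i)⁻¹ ≤ (f i)⁻¹ - 1 := Real.log_le_sub_one_of_pos (inv_pos.2 (hf_pos i))
      rw [Real.log_inv] at h1
      have hfne : f i ≠ 0 := (hf_pos i).ne'
      have h2 : (f i)⁻¹ - 1 = (1 - f i) / f i := by field_simp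
      have h3 : (1 - f i) / f i ≤ (1 - f i) / 2⁻¹ := by
        apply div_le_div_of_nonneg_left _ (by norm_num) (hf_half i)
        have := hpow_pos i; simp only [hfdef]; nlinarith
      have h4 : 1 - f i = x ^ (i + 1) := by simp [hfdef]
      rw [h2] at h1
      calc -Real.log (f i) ≤ (1 - f i) / f i := h1
        _ ≤ (1 - f i) / 2⁻¹ := h3
        _ = 2 * x ^ (i+1) := by rw [h4]; ring
    have hgeo : Summable (fun i : ℕ => x ^ i) := summable_geometric_of_lt_one hx0.le (by linarith)
    have hgeo2 : Summable (fun i : ℕ => 2 * x ^ (i + 1)) := by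
      have := (hgeo.mul_left (2 * x))
      apply this.congr
      intro i; rw [pow_succ]; ring
    have hneg : Summable (fun i => -Real.log (f i)) :=
      Summable.of_nonneg_of_le
        (fun i => neg_nonneg.2 (Real.log_nonpos (hf_pos i).le (hf_le1 i))) key hgeo2
    simpa using hneg.neg
  have hmult : Multipliable f :=
    Real.multipliable_of_summable_log hf_pos hlog
  have htend : Tendsto (fun N => ∏ i ∈ Finset.range N, f i) atTop (𝓝 (clC p)) := by
    have : clC p = ∏' i, f i := rfl
    rw [this]
    exact hmult.hasProd.tendsto_prod_nat
  constructor
  · exact ge_of_tendsto' htend fun n => Finset.prod_nonneg fun i _ => (hf_pos i).le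
  · refine le_of_tendsto htend (eventually_atTop.2 ⟨1, fun n hn => ?_⟩)
    have h0 : (0:ℕ) ∈ Finset.range n := Finset.mem_range.2 (by omega)
    rw [← Finset.mul_prod_erase _ f h0]
    have hle1 : ∏ i ∈ (Finset.range n).erase 0, f i ≤ 1 :=
      Finset.prod_le_one (fun i _ => (hf_pos i).le) (fun i _ => hf_le1 i)
    have hge0 : 0 ≤ ∏ i ∈ (Finset.range n).erase 0, f i :=
      Finset.prod_nonneg (fun i _ => (hf_pos i).le)
    have hf0 : f 0 = 1 - x := by simp [hfdef]
    nlinarith [hf_pos 0]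

lemma Pp_zero (p : ℕ) : Pp p {partZero} = clC p := by
  have hlen : partZero.2.parts.toList.length = 0 := by
    simp [partZero, Multiset.toList_zero]
  haveI : IsEmpty (Fin (partZero.2.parts.toList.length)) := by
    rw [hlen]; infer_instance
  haveI : Subsingleton (pGroup p partZero) := ⟨fun a b => funext fun i => isEmptyElim i⟩
  haveI : Subsingleton (AddAut (pGroup p partZero)) :=
    ⟨fun a b => AddEquiv.ext fun x => Subsingleton.elim _ _⟩
  have hcard : Nat.card (AddAut (pGroup p partZero)) = 1 :=
    Nat.card_eq_one_iff_unique.2 ⟨‹_›, ⟨AddEquiv.refl _⟩⟩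
  unfold Pp
  rw [tsum_singleton partZero (wCL p)]
  have : wCL p partZero = 1 := by
    unfold wCL; rw [hcard]; norm_num
  rw [this, one_mul]

lemma exists_big_prime_sum (n : ℕ) (C : ℝ) :
    ∃ I : Finset Nat.Primes, (∀ p ∈ I, n < (p : ℕ)) ∧ C < ∑ p ∈ I, ((p : ℕ) : ℝ)⁻¹ := by
  classical
  by_contra hcon
  push_neg at hcon
  set g : Nat.Primes → ℝ := fun p => if n < (p : ℕ) then ((p : ℕ) : ℝ)⁻¹ else 0 with hg
  have hg0 : ∀ p, 0 ≤ g p := by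
    intro p; simp only [hg]; split
    · positivity
    · exact le_rfl
  have hsum : ∀ I : Finset Nat.Primes, ∑ p ∈ I, g p ≤ C := by
    intro I
    have h1 : ∑ p ∈ I, g p = ∑ p ∈ I.filter (fun p : Nat.Primes => n < (p : ℕ)), ((p : ℕ) : ℝ)⁻¹ :=
      (Finset.sum_filter _ _).symm
    rw [h1]
    exact hcon _ fun p hp => (Finset.mem_filter.1 hp).2
  have hgsum : Summable g := summable_of_sum_le hg0 hsum
  set h : Nat.Primes → ℝ := fun p => if n < (p : ℕ) then 0 else ((p : ℕ) : ℝ)⁻¹ with hh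
  have hhsum : Summable h := by
    apply summable_of_finite_support
    have hsub : Function.support h ⊆ (fun p : Nat.Primes => (p : ℕ)) ⁻¹' Set.Iic n := by
      intro p hp
      by_cases hnp : n < (p : ℕ)
      · exact absurd (by simp [hh, hnp]) hp
      · simpa [Set.mem_preimage, Set.mem_Iic] using not_lt.mp hnp
    exact Set.Finite.subset
      ((Set.finite_Iic n).preimage (Set.injOn_of_injective (fun a b hab => Subtype.ext hab))) hsub
  have hsum2 : Summable (fun p : Nat.Primes => (1 / (p : ℕ) : ℝ)) := by
    apply (hgsum.add hhsum).congr
    intro p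
    by_cases hnp : n < (p : ℕ) <;> simp [hg, hh, hnp, one_div]
  exact Nat.Primes.not_summable_one_div hsum2

end AuxLemmas

/-- For any content `μ` on an algebra `𝒜` of subsets of `𝔾` compatible with the
local Cohen–Lenstra probabilities, the set `S_n = {G : ord(G) = n}` has content `0`
whenever it is in `𝒜`; consequently, if all `S_n` are in `𝒜`, then `𝔾` is a countable
disjoint union of `μ`-null sets of `𝒜`, so `μ` is not countably additive. -/
theorem order_null_content
    (A : Set (Set GG)) (μ : Set GG → ℝ)
    (hempty : ∅ ∈ A)
    (hcompl : ∀ s ∈ A, sᶜ ∈ A)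
    (hunion : ∀ s ∈ A, ∀ t ∈ A, s ∪ t ∈ A)
    (hμempty : μ ∅ = 0)
    (hnonneg : ∀ s ∈ A, 0 ≤ μ s)
    (hadd : ∀ s ∈ A, ∀ t ∈ A, Disjoint s t → μ (s ∪ t) = μ s + μ t)
    (htotal : μ Set.univ = 1)
    (hproj : ∀ (p : Nat.Primes) (M : Set PartitionsAll), (fun G : GG => G p) ⁻¹' M ∈ A)
    (hindep : ∀ (I : Finset Nat.Primes) (M : Nat.Primes → Set PartitionsAll),
      μ (⋂ p ∈ I, (fun G : GG => G p) ⁻¹' (M p)) = ∏ p ∈ I, Pp (p : ℕ) (M p)) :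
    (∀ n : ℕ, 1 ≤ n → {G : GG | ordG G = n} ∈ A → μ {G : GG | ordG G = n} = 0) ∧
      ((∀ n : ℕ, 1 ≤ n → {G : GG | ordG G = n} ∈ A) →
        (Pairwise (Function.onFun Disjoint fun n : ℕ => {G : GG | ordG G = n + 1})) ∧
        (⋃ n : ℕ, {G : GG | ordG G = n + 1}) = Set.univ ∧
        (∀ n : ℕ, μ {G : GG | ordG G = n + 1} = 0) ∧
        ¬ (∀ (C : ℕ → Set GG), (∀ i, C i ∈ A) → (⋃ i, C i) ∈ A →
            Pairwise (Function.onFun Disjoint C) →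
            HasSum (fun i => μ (C i)) (μ (⋃ i, C i)))) := by
  classical
  have hunivA : Set.univ ∈ A := by simpa using hcompl ∅ hempty
  have hinter : ∀ s ∈ A, ∀ t ∈ A, s ∩ t ∈ A := by
    intro s hs t ht
    have := hcompl _ (hunion _ (hcompl s hs) _ (hcompl t ht))
    simpa [Set.compl_union] using this
  have hmono : ∀ s ∈ A, ∀ t ∈ A, s ⊆ t → μ s ≤ μ t := by
    intro s hs t ht hst
    have hd : t ∩ sᶜ ∈ A := hinter t ht _ (hcompl s hs)
    have hu : s ∪ (t ∩ sᶜ) = t := by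
      ext x
      constructor
      · rintro (h | h)
        · exact hst h
        · exact h.1
      · intro h
        by_cases hx : x ∈ s
        · exact Or.inl hx
        · exact Or.inr ⟨h, hx⟩
    have hdisj : Disjoint s (t ∩ sᶜ) := Set.disjoint_left.2 fun x hx hx2 => hx2.2 hx
    have hμ := hadd s hs _ hd hdisj
    rw [hu] at hμ
    have := hnonneg _ hd
    linarith
  have hInterA : ∀ (I : Finset Nat.Primes) (M : Nat.Primes → Set PartitionsAll),
      (⋂ p ∈ I, (fun G : GG => G p) ⁻¹' (M p)) ∈ A := by
    intro I M
    induction I using Finset.induction_on with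
    | empty => simpa using hunivA
    | insert _ _ hne ih =>
      rw [Finset.set_biInter_insert]
      exact hinter _ (hproj _ _) _ ih
  have part1 : ∀ n : ℕ, 1 ≤ n → {G : GG | ordG G = n} ∈ A → μ {G : GG | ordG G = n} = 0 := by
    intro n hn hSA
    set S := {G : GG | ordG G = n} with hSdef
    have hsub : ∀ I : Finset Nat.Primes, (∀ p ∈ I, n < (p : ℕ)) →
        S ⊆ ⋂ p ∈ I, (fun G : GG => G p) ⁻¹' ({partZero} : Set PartitionsAll) := by
      intro I hI G hG
      have hGn : ordG G = n := hG
      simp only [Set.mem_iInter]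
      intro p hp
      simp only [Set.mem_preimage, Set.mem_singleton_iff]
      by_contra hne
      have hsupp : p ∈ G.support := Finsupp.mem_support_iff.2 (by
        intro h0
        exact hne (by rw [h0]; rfl))
      have hdvd : (p : ℕ) ^ (G p).1 ∣ ordG G := by
        unfold ordG Finsupp.prod
        exact Finset.dvd_prod_of_mem _ hsupp
      have h1 : 1 ≤ (G p).1 := by
        by_contra h0
        push_neg at h0
        exact hne (lam_eq_zero (by omega))
      have hpn : (p : ℕ) ∣ n := by
        have : (p : ℕ) ∣ ordG G :=
          dvd_trans (dvd_pow_self _ (by omega : (G p).1 ≠ 0)) hdvd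
        rwa [hGn] at this
      have hle := Nat.le_of_dvd (by omega) hpn
      have := hI p hp
      omega
    have hle : ∀ I : Finset Nat.Primes, (∀ p ∈ I, n < (p : ℕ)) →
        μ S ≤ ∏ p ∈ I, clC (p : ℕ) := by
      intro I hI
      have h1 := hmono S hSA _ (hInterA I fun _ => {partZero}) (hsub I hI)
      rw [hindep I fun _ => {partZero}] at h1
      calc μ S ≤ ∏ p ∈ I, Pp (p : ℕ) {partZero} := h1
        _ = ∏ p ∈ I, clC (p : ℕ) := Finset.prod_congr rfl fun p _ => Pp_zero _
    have h0le : 0 ≤ μ S := hnonneg _ hSA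
    by_contra hne0
    have hpos : 0 < μ S := lt_of_le_of_ne h0le (Ne.symm hne0)
    obtain ⟨I, hI, hbig⟩ := exists_big_prime_sum n (-Real.log (μ S))
    have hfinal : μ S ≤ Real.exp (-∑ p ∈ I, ((p : ℕ) : ℝ)⁻¹) := by
      calc μ S ≤ ∏ p ∈ I, clC (p : ℕ) := hle I hI
        _ ≤ ∏ p ∈ I, Real.exp (-((p : ℕ) : ℝ)⁻¹) := by
            refine Finset.prod_le_prod (fun p _ => (clC_aux p.2.two_le).1) (fun p _ => ?_)
            have h2 := (clC_aux p.2.two_le).2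
            have h3 := Real.add_one_le_exp (-((p : ℕ) : ℝ)⁻¹)
            linarith
        _ = Real.exp (∑ p ∈ I, -((p : ℕ) : ℝ)⁻¹) := (Real.exp_sum _ _).symm
        _ = Real.exp (-∑ p ∈ I, ((p : ℕ) : ℝ)⁻¹) := by rw [Finset.sum_neg_distrib]
    have hlt : Real.exp (-∑ p ∈ I, ((p : ℕ) : ℝ)⁻¹) < μ S := by
      calc Real.exp (-∑ p ∈ I, ((p : ℕ) : ℝ)⁻¹) < Real.exp (Real.log (μ S)) :=
            Real.exp_lt_exp.2 (by linarith)
        _ = μ S := Real.exp_log hpos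
    linarith
  refine ⟨part1, fun hAll => ?_⟩
  have hord_pos : ∀ G : GG, 0 < ordG G := by
    intro G
    unfold ordG Finsupp.prod
    exact Finset.prod_pos fun q _ => pow_pos q.2.pos _
  have hdisj : Pairwise (Function.onFun Disjoint fun n : ℕ => {G : GG | ordG G = n + 1}) := by
    intro i j hij
    simp only [Function.onFun, Set.disjoint_left, Set.mem_setOf_eq]
    intro G hGi hGj
    exact hij (by omega)
  have hU : (⋃ n : ℕ, {G : GG | ordG G = n + 1}) = Set.univ := by
    ext G
    simp only [Set.mem_iUnion, Set.mem_setOf_eq, Set.mem_univ, iff_true]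
    exact ⟨ordG G - 1, by have := hord_pos G; omega⟩
  have hzero : ∀ n : ℕ, μ {G : GG | ordG G = n + 1} = 0 := fun n =>
    part1 (n + 1) (by omega) (hAll (n + 1) (by omega))
  refine ⟨hdisj, hU, hzero, fun H => ?_⟩
  have hmem : ∀ i : ℕ, {G : GG | ordG G = i + 1} ∈ A := fun i => hAll (i + 1) (by omega)
  have hUA : (⋃ i : ℕ, {G : GG | ordG G = i + 1}) ∈ A := by rw [hU]; exact hunivA
  have hs := H _ hmem hUA hdisj
  rw [hU, htotal] at hs
  have hs' : HasSum (fun _ : ℕ => (0 : ℝ)) 1 := by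
    simp only [hzero] at hs
    exact hs
  exact one_ne_zero (hs'.unique hasSum_zero)
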